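/- Soundness of the anonymity axioms: if an anonymity atom x Υ y is derivable from a set Σ of anonymity atoms using rules A1–A4, then for every set M and every team X over the variables with values in M, if X satisfies every atom in Σ then X satisfies x Υ y. -/

import Mathlib

/-- A team `X` over variables `V` with values in `M` satisfies the anonymity atom `x Υ y`. -/
def Anon {V M : Type*} (X : Set (V → M)) (x y : List V) : Prop :=
  ∀ s ∈ X, ∃ s' ∈ X, (∀ v ∈ x, s v = s' v) ∧ ∃ v ∈ y, s v ≠ s' v

/-- Derivability of anonymity atoms from a set `Sig` of anonymity atoms by rules A1–A4. -/
inductive Derives {V : Type*} (Sig : Set (List V × List V)) : List V → List V → Prop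
  | mem {x y : List V} : (x, y) ∈ Sig → Derives Sig x y
  /-- A1 (permutation) -/
  | perm {x y x' y' : List V} :
      Derives Sig x y → x.Perm x' → y.Perm y' → Derives Sig x' y'
  /-- A2 (monotonicity) -/
  | mono {x y z u : List V} : Derives Sig (x ++ y) z → Derives Sig x (z ++ u)
  /-- A3 (cancellation) -/
  | cancel {x y z : List V} : Derives Sig (x ++ y) (z ++ y) → Derives Sig (x ++ y) z
  /-- A4 -/
  | bot {x x' y' : List V} : Derives Sig x [] → Derives Sig x' y'

/-- Soundness of the anonymity axioms A1–A4. -/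
theorem derives_sound {V : Type*} (Sig : Set (List V × List V)) (x y : List V)
    (h : Derives Sig x y) :
    ∀ (M : Type) (X : Set (V → M)), (∀ p ∈ Sig, Anon X p.1 p.2) → Anon X x y := by
  induction h with
  | mem hmem => intro M X hSig; exact hSig _ hmem
  | perm _ hx hy ih =>
      intro M X hSig s hs
      obtain ⟨s', hs', hagree, v, hv, hne⟩ := ih M X hSig s hs
      exact ⟨s', hs', fun w hw => hagree w (hx.mem_iff.mpr hw),
        v, hy.mem_iff.mp hv, hne⟩
  | mono _ ih =>
      intro M X hSig s hs
      obtain ⟨s', hs', hagree, v, hv, hne⟩ := ih M X hSig s hs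
      exact ⟨s', hs', fun w hw => hagree w (List.mem_append_left _ hw),
        v, List.mem_append_left _ hv, hne⟩
  | cancel _ ih =>
      intro M X hSig s hs
      obtain ⟨s', hs', hagree, v, hv, hne⟩ := ih M X hSig s hs
      rcases List.mem_append.mp hv with hvz | hvy
      · exact ⟨s', hs', hagree, v, hvz, hne⟩
      · exact absurd (hagree v (List.mem_append_right _ hvy)) hne
  | bot _ ih =>
      intro M X hSig s hs
      obtain ⟨s', hs', hagree, v, hv, hne⟩ := ih M X hSig s hs
      exact absurd hv List.not_mem_nil
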